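/- Let C₁ be a binary constraint on variables (w,z) and C₂ a binary constraint on variables (x,y) of a CSP, where y = w (the second-listed variable of C₂ equals the first variable of C₁) and x, y, z are distinct with x before y before z. Then the π₁ function of C₁ semi-commutes with the π₁ function of C₂ w.r.t. the componentwise ordering ⊇: for all tuples (X₁,…,X_n), (π₁ of C₁)⁺((π₁ of C₂)⁺(X)) ⊇-componentwise (π₁ of C₂)⁺((π₁ of C₁)⁺(X)). -/
import Mathlib


/-- Canonic extension of the `π₁` function of a binary constraint `C` on the
variables `(p, q)`: it shrinks the domain of `p` using the domain of `q`. -/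
def arcApply {n : ℕ} {D : Fin n → Type*} {p q : Fin n}
    (C : Set (D p × D q)) (X : ∀ v, Set (D v)) : ∀ v, Set (D v) :=
  Function.update X p {a ∈ X p | ∃ b ∈ X q, (a, b) ∈ C}

/-- Semi-commutativity Lemma: for a binary constraint `C₁` on `(y, z)` and a binary
constraint `C₂` on `(x, y)` with `x` before `y` before `z`, the `π₁` function of
`C₁` semi-commutes with the `π₁` function of `C₂` w.r.t. the componentwise
ordering `⊇`: each component of `(π₁C₁)⁺((π₁C₂)⁺(X))` contains the corresponding
component of `(π₁C₂)⁺((π₁C₁)⁺(X))`. -/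
theorem arc_semi_commutativity {n : ℕ} {D : Fin n → Type*}
    (x y z : Fin n) (hxy : x < y) (hyz : y < z)
    (C₁ : Set (D y × D z)) (C₂ : Set (D x × D y)) :
    ∀ X : ∀ v, Set (D v), ∀ v,
      arcApply C₂ (arcApply C₁ X) v ⊆ arcApply C₁ (arcApply C₂ X) v := by
  have hxy' : x ≠ y := ne_of_lt hxy
  have hyz' : y ≠ z := ne_of_lt hyz
  have hxz' : x ≠ z := ne_of_lt (hxy.trans hyz)
  intro X v
  unfold arcApply
  rcases eq_or_ne v x with rfl | hvx
  · simp only [Function.update_self, Function.update_of_ne hxy',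
      Function.update_of_ne hxy'.symm, Function.update_of_ne hxz',
      Function.update_of_ne hxz'.symm, Function.update_of_ne hyz'.symm,
      Set.mem_setOf_eq, Set.setOf_subset_setOf]
    rintro a ⟨ha1, b, ⟨hb, hbz⟩, hab⟩
    exact ⟨ha1, b, hb, hab⟩
  · rcases eq_or_ne v y with rfl | hvy
    · simp only [Function.update_self, Function.update_of_ne hxy',
        Function.update_of_ne hxy'.symm, Function.update_of_ne hxz',
        Function.update_of_ne hxz'.symm, Function.update_of_ne hyz'.symm]
      exact subset_rfl
    · simp only [Function.update_of_ne hvx, Function.update_of_ne hvy]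
      exact subset_rfl
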